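/- For every δ ∈ [0, 1/2] and every R1 ∈ [0, 2], one has R1/2 − h2(δ) ≤ 1 − h2(δ ⋆ h2⁻¹(1 − R1/2)); consequently max{ R1/2 − h2(δ), 1 − h2(δ ⋆ h2⁻¹(1 − R1/2)) } = 1 − h2(δ ⋆ h2⁻¹(1 − R1/2)). -/

import Mathlib

open MeasureTheory

/-- Binary entropy function (base 2), with the convention `0 * log₂ 0 = 0`
(automatic since `Real.logb 2 0 = 0`). -/
noncomputable def h2 (p : ℝ) : ℝ :=
  -(p * Real.logb 2 p) - (1 - p) * Real.logb 2 (1 - p)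

/-- Inverse of the binary entropy function: for `q ≥ 0`, the unique `r ∈ [0, 1/2]`
with `h2 r = q` (realized as the infimum of the solution set); `0` for `q < 0`. -/
noncomputable def h2inv (q : ℝ) : ℝ :=
  if q < 0 then 0 else sInf {r : ℝ | 0 ≤ r ∧ r ≤ 1 / 2 ∧ h2 r = q}

/-- Binary convolution `a ⋆ b = a(1-b) + (1-a)b`. -/
def bconv (a b : ℝ) : ℝ := a * (1 - b) + (1 - a) * b

lemma h2_eq (p : ℝ) : h2 p = Real.binEntropy p / Real.log 2 := by
  unfold h2 Real.binEntropy
  rw [Real.log_inv, Real.log_inv]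
  unfold Real.logb
  ring

lemma log2_pos : (0:ℝ) < Real.log 2 := Real.log_pos (by norm_num)

lemma h2_zero : h2 0 = 0 := by simp [h2_eq]

lemma h2_half : h2 (1/2) = 1 := by
  rw [h2_eq, show (1:ℝ)/2 = 2⁻¹ by norm_num, Real.binEntropy_two_inv,
    div_self log2_pos.ne']

lemma h2_le_one (p : ℝ) : h2 p ≤ 1 := by
  rw [h2_eq, div_le_one log2_pos]
  exact Real.binEntropy_le_log_two

lemma h2_continuous : Continuous h2 := by
  simp only [funext h2_eq]
  exact Real.binEntropy_continuous.div_const _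

lemma h2_monoOn : MonotoneOn h2 (Set.Icc 0 (1/2)) := by
  have : (1:ℝ)/2 = 2⁻¹ := by norm_num
  rw [this]
  intro a ha b hb hab
  rw [h2_eq, h2_eq, div_le_div_iff_of_pos_right log2_pos]
  exact Real.binEntropy_strictMonoOn.monotoneOn ha hb hab

lemma h2_concave_ineq {x y a b : ℝ} (hx : x ∈ Set.Icc (0:ℝ) 1)
    (hy : y ∈ Set.Icc (0:ℝ) 1) (ha : 0 ≤ a) (hb : 0 ≤ b) (hab : a + b = 1) :
    a * h2 x + b * h2 y ≤ h2 (a * x + b * y) := by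
  have h := (Real.strictConcave_binEntropy.concaveOn).2 hx hy ha hb hab
  simp only [smul_eq_mul] at h
  rw [h2_eq, h2_eq, h2_eq,
    show a * (Real.binEntropy x / Real.log 2) + b * (Real.binEntropy y / Real.log 2)
      = (a * Real.binEntropy x + b * Real.binEntropy y) / Real.log 2 from by ring,
    div_le_div_iff_of_pos_right log2_pos]
  exact h

/-- chord bound: `2x ≤ h2 x` on `[0, 1/2]`. -/
lemma two_mul_le_h2 {x : ℝ} (hx0 : 0 ≤ x) (hx : x ≤ 1/2) : 2 * x ≤ h2 x := by
  have h := h2_concave_ineq (x := 0) (y := 1/2) (a := 1 - 2*x) (b := 2*x)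
    (by norm_num) (by norm_num) (by linarith) (by linarith) (by ring)
  rw [h2_zero, h2_half] at h
  have e : (1 - 2*x) * 0 + 2*x * (1/2) = x := by ring
  rw [e] at h
  linarith

/-- subadditivity of `h2` from concavity and `h2 0 = 0`. -/
lemma h2_subadd {x y : ℝ} (hx : 0 ≤ x) (hy : 0 ≤ y) (hxy : x + y ≤ 1) :
    h2 (x + y) ≤ h2 x + h2 y := by
  rcases eq_or_lt_of_le (by linarith : (0:ℝ) ≤ x + y) with h0 | h0
  · have hx0 : x = 0 := by linarith
    have hy0 : y = 0 := by linarith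
    rw [hx0, hy0]
    simp [h2_zero]
  set s := x + y with hs
  have hmem : s ∈ Set.Icc (0:ℝ) 1 := ⟨h0.le, hxy⟩
  have key : ∀ t : ℝ, 0 ≤ t → t ≤ s → (t / s) * h2 s ≤ h2 t := by
    intro t ht hts
    have hds : t/s ≤ 1 := by rw [div_le_one h0]; exact hts
    have h := h2_concave_ineq (x := 0) (y := s) (a := 1 - t/s) (b := t/s)
      (by norm_num) hmem (by linarith) (by positivity) (by ring)
    rw [h2_zero] at h
    have e : (1 - t/s) * 0 + (t/s) * s = t := by field_simp; ring
    rw [e] at h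
    linarith
  have hxk := key x hx (by linarith)
  have hyk := key y hy (by linarith)
  have : (x / s) * h2 s + (y / s) * h2 s = h2 s := by
    field_simp
    ring
  linarith

lemma h2inv_spec {q : ℝ} (hq0 : 0 ≤ q) (hq1 : q ≤ 1) :
    0 ≤ h2inv q ∧ h2inv q ≤ 1/2 ∧ h2 (h2inv q) = q := by
  have hset : {r : ℝ | 0 ≤ r ∧ r ≤ 1 / 2 ∧ h2 r = q}
      = Set.Icc 0 (1/2) ∩ h2 ⁻¹' {q} := by
    ext r; simp [Set.mem_Icc, and_assoc]
  have hclosed : IsClosed {r : ℝ | 0 ≤ r ∧ r ≤ 1 / 2 ∧ h2 r = q} := by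
    rw [hset]
    exact isClosed_Icc.inter (isClosed_singleton.preimage h2_continuous)
  have hne : {r : ℝ | 0 ≤ r ∧ r ≤ 1 / 2 ∧ h2 r = q}.Nonempty := by
    have hc : ContinuousOn h2 (Set.Icc 0 (1/2)) := h2_continuous.continuousOn
    have : q ∈ Set.Icc (h2 0) (h2 (1/2)) := by
      rw [h2_zero, h2_half]; exact ⟨hq0, hq1⟩
    obtain ⟨r, hr, hrq⟩ := intermediate_value_Icc (by norm_num : (0:ℝ) ≤ 1/2) hc this
    exact ⟨r, hr.1, hr.2, hrq⟩
  have hbdd : BddBelow {r : ℝ | 0 ≤ r ∧ r ≤ 1 / 2 ∧ h2 r = q} :=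
    ⟨0, fun r hr => hr.1⟩
  have hmem := hclosed.csInf_mem hne hbdd
  have : h2inv q = sInf {r : ℝ | 0 ≤ r ∧ r ≤ 1 / 2 ∧ h2 r = q} := by
    unfold h2inv
    rw [if_neg (not_lt.mpr hq0)]
  rw [this]
  exact hmem

/-- For every `δ ∈ [0,1/2]` and `R1 ∈ [0,2]`:
`R1/2 − h2(δ) ≤ 1 − h2(δ ⋆ h2⁻¹(1 − R1/2))`, hence the max of the two
quantities equals the latter. -/
theorem stmt3 (δ R1 : ℝ) (hδ : δ ∈ Set.Icc (0 : ℝ) (1 / 2))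
    (hR1 : R1 ∈ Set.Icc (0 : ℝ) 2) :
    R1 / 2 - h2 δ ≤ 1 - h2 (bconv δ (h2inv (1 - R1 / 2))) ∧
    max (R1 / 2 - h2 δ) (1 - h2 (bconv δ (h2inv (1 - R1 / 2))))
      = 1 - h2 (bconv δ (h2inv (1 - R1 / 2))) := by
  obtain ⟨hδ0, hδ2⟩ := hδ
  obtain ⟨hR0, hR2⟩ := hR1
  set q : ℝ := 1 - R1 / 2 with hq
  have hq0 : 0 ≤ q := by simp [hq]; linarith
  have hq1 : q ≤ 1 := by simp [hq]; linarith
  obtain ⟨hr0, hr2, hrq⟩ := h2inv_spec hq0 hq1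
  set r : ℝ := h2inv q with hrdef
  clear_value r q
  -- main inequality: h2 (bconv δ r) ≤ q + h2 δ = h2 r + h2 δ
  have key : h2 (bconv δ r) ≤ h2 r + h2 δ := by
    by_cases hsum : δ + r ≤ 1/2
    · -- bconv δ r ∈ [0, δ + r] ⊆ [0, 1/2], use monotonicity & subadditivity
      have hb0 : 0 ≤ bconv δ r := by unfold bconv; nlinarith
      have hble : bconv δ r ≤ δ + r := by unfold bconv; nlinarith
      have h1 : h2 (bconv δ r) ≤ h2 (δ + r) :=
        h2_monoOn ⟨hb0, by linarith⟩ ⟨by linarith, hsum⟩ hble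
      have h2' : h2 (δ + r) ≤ h2 δ + h2 r := h2_subadd hδ0 hr0 (by linarith)
      linarith
    · -- δ + r > 1/2 : h2 δ + h2 r ≥ 2δ + 2r ≥ 1 ≥ h2 (bconv δ r)
      have h1 := two_mul_le_h2 hδ0 hδ2
      have h2' := two_mul_le_h2 hr0 hr2
      have := h2_le_one (bconv δ r)
      linarith
  have main : R1 / 2 - h2 δ ≤ 1 - h2 (bconv δ r) := by
    linarith [key]
  exact ⟨main, max_eq_right main⟩
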